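/- Let σ² > 0, let K ≥ 1 be an integer, and let 0 < d ≤ σ². Then lim_{M → ∞} σ² · ( (d/σ²)^{1/M} / ( K − (K−1)·(d/σ²)^{1/M} ) )^M = σ²·(d/σ²)^K. Since the total sum-rate over M rounds is fixed at R_Σ = (K/2)·log₂(σ²/d), the right-hand side equals σ²·2^{−2R_Σ}, the distortion-rate function of the Gaussian source at rate R_Σ; hence the multi-round scheme of K independent encodings per round is asymptotically rate-distortion optimal as the number of rounds tends to infinity. -/

import Mathlib

open Filter Real Topology

-- helper: M * (exp (L/M) - 1) → L for L ≠ 0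
lemma aux_mul_exp_sub_one (L : ℝ) (hL : L ≠ 0) :
    Tendsto (fun M : ℕ => (M : ℝ) * (Real.exp (L / M) - 1)) atTop (𝓝 L) := by
  have h1 : Tendsto (fun M : ℕ => L / (M : ℝ)) atTop (𝓝[≠] 0) := by
    rw [tendsto_nhdsWithin_iff]
    constructor
    · exact tendsto_const_div_atTop_nhds_zero_nat L
    · filter_upwards [eventually_gt_atTop 0] with M hM
      have : (M : ℝ) ≠ 0 := Nat.cast_ne_zero.mpr hM.ne'
      exact div_ne_zero hL this
  have hslope : Tendsto (slope Real.exp 0) (𝓝[≠] 0) (𝓝 1) := by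
    have := (hasDerivAt_exp 0)
    rw [Real.exp_zero] at this
    exact hasDerivAt_iff_tendsto_slope.mp this
  have h2 : Tendsto (fun M : ℕ => slope Real.exp 0 (L / M)) atTop (𝓝 1) :=
    hslope.comp h1
  have h3 : Tendsto (fun M : ℕ => L * slope Real.exp 0 (L / M)) atTop (𝓝 L) := by
    simpa using h2.const_mul L
  apply h3.congr'
  filter_upwards [eventually_gt_atTop 0] with M hM
  have hM0 : (M : ℝ) ≠ 0 := Nat.cast_ne_zero.mpr hM.ne'
  rw [slope_def_field]
  field_simp
  rw [Real.exp_zero]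
  field_simp
  rw [mul_zero, sub_zero, mul_div_cancel_left₀ _ hL]

/-- STATEMENT 14: asymptotic rate-distortion optimality of the multi-round Gaussian scheme with
`K` independent encodings per round.  For `0 < d ≤ σ²`,
`lim_{M → ∞} σ²·( (d/σ²)^{1/M} / (K − (K−1)·(d/σ²)^{1/M}) )^M = σ²·(d/σ²)^K`, and since the
total sum-rate over `M` rounds is fixed at `R_Σ = (K/2)·log₂(σ²/d)`, the limit equals
`σ²·2^{−2R_Σ}`, the distortion-rate function of the Gaussian source at rate `R_Σ`. -/
theorem gaussian_multiround_optimal (σ2 : ℝ) (hσ : 0 < σ2) (K : ℕ) (hK : 1 ≤ K)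
    (d : ℝ) (hd : 0 < d) (hd' : d ≤ σ2) :
    Filter.Tendsto
      (fun M : ℕ =>
        σ2 * ((d / σ2) ^ ((1 : ℝ) / M) /
          ((K : ℝ) - ((K : ℝ) - 1) * (d / σ2) ^ ((1 : ℝ) / M))) ^ M)
      Filter.atTop (nhds (σ2 * (d / σ2) ^ K)) ∧
    σ2 * (d / σ2) ^ K
      = σ2 * (2 : ℝ) ^ (-(2 * (((K : ℝ) / 2) * Real.logb 2 (σ2 / d)))) := by
  have hx0 : 0 < d / σ2 := div_pos hd hσ
  have hx1 : d / σ2 ≤ 1 := (div_le_one hσ).mpr hd'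
  constructor
  · rcases eq_or_lt_of_le hx1 with h1 | h1
    · -- d/σ2 = 1 : constant sequence
      have heq : ∀ M : ℕ,
          σ2 * ((d / σ2) ^ ((1 : ℝ) / M) /
            ((K : ℝ) - ((K : ℝ) - 1) * (d / σ2) ^ ((1 : ℝ) / M))) ^ M
          = σ2 * (d / σ2) ^ K := by
        intro M
        rw [h1]
        simp
      exact Tendsto.congr (fun M => (heq M).symm) tendsto_const_nhds
    · -- d/σ2 < 1
      set x := d / σ2 with hxdef
      set L := Real.log x with hLdef
      have hL : L < 0 := Real.log_neg hx0 h1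
      have hLne : L ≠ 0 := hL.ne
      set c := (K : ℝ) - 1 with hcdef
      have hc : 0 ≤ c := by
        have : (1 : ℝ) ≤ (K : ℝ) := by exact_mod_cast hK
        linarith
      set v : ℕ → ℝ := fun M => Real.exp (L / M) - 1 with hvdef
      -- basic facts
      have hvle : ∀ M : ℕ, v M ≤ 0 := by
        intro M
        have : L / M ≤ 0 := by
          rcases Nat.eq_zero_or_pos M with h | h
          · simp [h]
          · exact le_of_lt (div_neg_of_neg_of_pos hL (by exact_mod_cast h))
        simp [hvdef, Real.exp_le_one_iff.mpr this]
      have hvne : ∀ M : ℕ, 1 ≤ M → v M ≠ 0 := by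
        intro M hM
        have hM0 : (0 : ℝ) < M := by exact_mod_cast hM
        have : L / M < 0 := div_neg_of_neg_of_pos hL hM0
        simp only [hvdef, sub_ne_zero]
        intro h
        have h0 : L / (M:ℝ) = (0:ℝ) := Real.exp_injective (by simpa [Real.exp_zero] using h)
        exact this.ne h0
      have hvlim : Tendsto v atTop (𝓝 0) := by
        have h1' : Tendsto (fun M : ℕ => L / (M : ℝ)) atTop (𝓝 0) :=
          tendsto_const_div_atTop_nhds_zero_nat L
        have := (Real.continuous_exp.tendsto 0).comp h1'
        rw [Real.exp_zero] at this
        have := this.sub (tendsto_const_nhds (x := (1:ℝ)))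
        simpa [hvdef, Function.comp] using this
      have hvlim' : Tendsto v atTop (𝓝[≠] 0) := by
        rw [tendsto_nhdsWithin_iff]
        refine ⟨hvlim, ?_⟩
        filter_upwards [eventually_ge_atTop 1] with M hM
        exact hvne M hM
      have hMv : Tendsto (fun M : ℕ => (M : ℝ) * v M) atTop (𝓝 L) :=
        aux_mul_exp_sub_one L hLne
      -- derivative of t ↦ log (1 - c t) at 0 is -c
      have hg : HasDerivAt (fun t : ℝ => Real.log (1 - c * t)) (-c) 0 := by
        have h0 : HasDerivAt (fun t : ℝ => 1 - c * t) (-c) 0 := by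
          simpa using ((hasDerivAt_id 0).const_mul c).const_sub 1
        have := h0.log (by norm_num)
        simpa using this
      have hslopeg : Tendsto (slope (fun t : ℝ => Real.log (1 - c * t)) 0) (𝓝[≠] 0)
          (𝓝 (-c)) := hasDerivAt_iff_tendsto_slope.mp hg
      have hratio : Tendsto (fun M : ℕ => Real.log (1 - c * v M) / v M) atTop (𝓝 (-c)) := by
        have := hslopeg.comp hvlim'
        apply this.congr'
        filter_upwards [eventually_ge_atTop 1] with M hM
        simp [Function.comp, slope_def_field]
      have hlogD : Tendsto (fun M : ℕ => (M : ℝ) * Real.log ((K : ℝ) - c * Real.exp (L / M)))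
          atTop (𝓝 (L * (-c))) := by
        have hprod := hMv.mul hratio
        apply hprod.congr'
        filter_upwards [eventually_ge_atTop 1] with M hM
        have hvne' := hvne M hM
        have hKc : (K : ℝ) - c * Real.exp (L / M) = 1 - c * v M := by
          simp only [hvdef]
          rw [hcdef]
          ring
        rw [hKc]
        field_simp
      -- final exponent limit
      have hexp : Tendsto (fun M : ℕ => Real.exp (L - (M : ℝ) * Real.log ((K : ℝ) - c * Real.exp (L / M))))
          atTop (𝓝 (Real.exp (L + c * L))) := by
        have : Tendsto (fun M : ℕ => L - (M : ℝ) * Real.log ((K : ℝ) - c * Real.exp (L / M)))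
            atTop (𝓝 (L - L * (-c))) := tendsto_const_nhds.sub hlogD
        have h' := (Real.continuous_exp.tendsto _).comp this
        convert h' using 2
        · rfl
        · congr 1; ring
      have hmul : Tendsto (fun M : ℕ => σ2 * Real.exp (L - (M : ℝ) * Real.log ((K : ℝ) - c * Real.exp (L / M))))
          atTop (𝓝 (σ2 * Real.exp (L + c * L))) := hexp.const_mul σ2
      have hxK : σ2 * x ^ K = σ2 * Real.exp (L + c * L) := by
        have hxe : x = Real.exp L := (Real.exp_log hx0).symm
        rw [hxe, ← Real.exp_nat_mul]
        congr 1
        rw [hcdef]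
        have : (1 : ℝ) ≤ (K : ℝ) := by exact_mod_cast hK
        ring
      rw [hxK]
      apply hmul.congr'
      filter_upwards [eventually_ge_atTop 1] with M hM
      have hM0 : (M : ℝ) ≠ 0 := by
        have : (0:ℝ) < M := by exact_mod_cast hM
        exact this.ne'
      have hxr : x ^ ((1 : ℝ) / M) = Real.exp (L / M) := by
        rw [Real.rpow_def_of_pos hx0, ← hLdef, mul_one_div]
      have hexpLM1 : Real.exp (L / M) ≤ 1 := by
        apply Real.exp_le_one_iff.mpr
        exact le_of_lt (div_neg_of_neg_of_pos hL (by exact_mod_cast hM))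
      have hD : (1 : ℝ) ≤ (K : ℝ) - c * Real.exp (L / M) := by
        have h1 : c * Real.exp (L / M) ≤ c := by
          nlinarith [Real.exp_pos (L / M)]
        have : (1 : ℝ) ≤ (K : ℝ) := by exact_mod_cast hK
        rw [hcdef]; nlinarith
      have hDpos : (0 : ℝ) < (K : ℝ) - c * Real.exp (L / M) := lt_of_lt_of_le one_pos hD
      rw [hxr]
      congr 1
      -- (exp(L/M) / D)^M = exp(L - M log D)
      have hDM : ((K : ℝ) - c * Real.exp (L / M)) ^ M
          = Real.exp ((M : ℝ) * Real.log ((K : ℝ) - c * Real.exp (L / M))) := by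
        rw [Real.exp_nat_mul, Real.exp_log hDpos]
      rw [div_pow, ← Real.exp_nat_mul, hDM, ← Real.exp_sub]
      congr 1
      field_simp
  · -- equality of the limit with the distortion-rate function
    have hx : (0:ℝ) < d / σ2 := div_pos hd hσ
    have hinv : Real.logb 2 (σ2 / d) = - Real.logb 2 (d / σ2) := by
      rw [← Real.logb_inv]
      congr 1
      rw [inv_div]
    have h1 : -(2 * (((K : ℝ) / 2) * Real.logb 2 (σ2 / d)))
        = Real.logb 2 (d / σ2) * (K : ℝ) := by
      rw [hinv]; ring
    have key : (2 : ℝ) ^ (-(2 * (((K : ℝ) / 2) * Real.logb 2 (σ2 / d)))) = (d / σ2) ^ K := by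
      rw [h1, Real.rpow_mul (by norm_num : (0:ℝ) ≤ 2),
        Real.rpow_logb (by norm_num) (by norm_num) hx, Real.rpow_natCast]
    rw [key]
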